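/- Let n ≥ 2, 1 ≤ k ≤ n−1, and δ₀, δ̃ ∈ (0,1]. Let λ₁ ≥ λ₂ ≥ … ≥ λ_n > 0, set κ_α = 1/λ_α and F^{αα} = σ_{k−1}(κ|α)·κ_α²/σ_k(κ)². Suppose ξ₁,…,ξ_n ∈ ℝ are such that there exists an index α₀ ≥ 2 with |ξ_{α₀}/λ_{α₀}| ≥ δ₀·|ξ₁/λ₁|. Then Σ_{α=1}^n F^{αα}·ξ_α²/λ_α ≥ (1 + δ̃·δ₀²)·F^{11}·ξ₁²/λ₁ + (1−δ̃)·Σ_{α≥2} F^{αα}·ξ_α²/λ_α. -/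

import Mathlib

open scoped Classical

noncomputable section

/-- The `j`-th elementary symmetric function of the family `κ` restricted to the
finite index set `s`; it is `1` for `j = 0`, and `0` for `j < 0` (or for `j`
larger than the cardinality of `s`). -/
def sigmaE {ι : Type*} (s : Finset ι) (j : ℤ) (κ : ι → ℝ) : ℝ :=
  if 0 ≤ j then ∑ t ∈ s.powersetCard j.toNat, ∏ i ∈ t, κ i else 0

/-- `σ_j(κ)`, the `j`-th elementary symmetric polynomial evaluated at `κ`. -/
def sigmaV {ι : Type*} [Fintype ι] (j : ℤ) (κ : ι → ℝ) : ℝ :=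
  sigmaE Finset.univ j κ

/-- `σ_j(κ|α)`: `σ_j` of `κ` with the `α`-th entry deleted. -/
def sigmaV1 {ι : Type*} [Fintype ι] [DecidableEq ι] (j : ℤ) (κ : ι → ℝ) (α : ι) : ℝ :=
  sigmaE (Finset.univ.erase α) j κ

/-- `σ_j(κ|αβ)`: `σ_j` of `κ` with the `α`-th and `β`-th entries deleted. -/
def sigmaV2 {ι : Type*} [Fintype ι] [DecidableEq ι] (j : ℤ) (κ : ι → ℝ) (α β : ι) : ℝ :=
  sigmaE ((Finset.univ.erase α).erase β) j κ

/-- `σ_j(A)` for a real `n × n` matrix `A`: the `j`-th elementary symmetric function of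
the eigenvalues of `A` when `A` is symmetric (= Hermitian over `ℝ`), junk value `0`
otherwise. -/
def sigmaMat {n : ℕ} (j : ℤ) (A : Matrix (Fin n) (Fin n) ℝ) : ℝ :=
  if h : A.IsHermitian then sigmaV j h.eigenvalues else 0

/-- The Hessian quotient operator `F(A) = σ_n(A)/σ_{n-k}(A)`. -/
def Fquot {n : ℕ} (k : ℕ) (A : Matrix (Fin n) (Fin n) ℝ) : ℝ :=
  sigmaMat (n : ℤ) A / sigmaMat ((n : ℤ) - (k : ℤ)) A

lemma sigmaE_nonneg {ι : Type*} (s : Finset ι) (j : ℤ) (κ : ι → ℝ)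
    (h : ∀ i ∈ s, 0 ≤ κ i) : 0 ≤ sigmaE s j κ := by
  unfold sigmaE
  split
  · refine Finset.sum_nonneg fun t ht => Finset.prod_nonneg fun i hi => ?_
    exact h i ((Finset.mem_powersetCard.1 ht).1 hi)
  · exact le_rfl

lemma sigmaE_erase {ι : Type*} [DecidableEq ι] (s : Finset ι) (a : ι) (ha : a ∈ s)
    (j : ℤ) (κ : ι → ℝ) :
    sigmaE s j κ = sigmaE (s.erase a) j κ + κ a * sigmaE (s.erase a) (j - 1) κ := by
  rcases lt_trichotomy j 0 with hj | hj | hj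
  · unfold sigmaE
    rw [if_neg (by omega), if_neg (by omega), if_neg (by omega)]
    ring
  · subst hj
    unfold sigmaE
    rw [if_pos le_rfl, if_pos le_rfl, if_neg (by omega)]
    simp
  · obtain ⟨m, rfl⟩ : ∃ m : ℕ, j = (m : ℤ) + 1 := ⟨(j - 1).toNat, by omega⟩
    unfold sigmaE
    rw [if_pos (by omega), if_pos (by omega), if_pos (by omega)]
    have htn : ((m : ℤ) + 1).toNat = m + 1 := by omega
    have htn' : ((m : ℤ) + 1 - 1).toNat = m := by omega
    rw [htn, htn']
    have hins : s = insert a (s.erase a) := (Finset.insert_erase ha).symm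
    conv_lhs => rw [hins]
    rw [Finset.powersetCard_succ_insert (Finset.notMem_erase a s)]
    have hdisj : Disjoint ((s.erase a).powersetCard (m + 1))
        (((s.erase a).powersetCard m).image (insert a)) := by
      rw [Finset.disjoint_right]
      intro t ht ht'
      obtain ⟨u, hu, rfl⟩ := Finset.mem_image.1 ht
      have := (Finset.mem_powersetCard.1 ht').1
      exact (Finset.notMem_erase a s) (this (Finset.mem_insert_self a u))
    rw [Finset.sum_union hdisj]
    congr 1
    rw [Finset.sum_image]
    · rw [Finset.mul_sum]
      refine Finset.sum_congr rfl fun t ht => ?_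
      have hat : a ∉ t := fun h =>
        (Finset.notMem_erase a s) ((Finset.mem_powersetCard.1 ht).1 h)
      rw [Finset.prod_insert hat]
    · intro t ht u hu h
      have hat : a ∉ t := fun h' =>
        (Finset.notMem_erase a s) ((Finset.mem_powersetCard.1 ht).1 h')
      have hau : a ∉ u := fun h' =>
        (Finset.notMem_erase a s) ((Finset.mem_powersetCard.1 hu).1 h')
      rw [← Finset.erase_insert hat, ← Finset.erase_insert hau, h]

lemma sigmaV1_mul_mono {ι : Type*} [Fintype ι] [DecidableEq ι] (κ : ι → ℝ)
    (hκ : ∀ i, 0 ≤ κ i) (j : ℤ) (α β : ι) (hne : α ≠ β) (hle : κ α ≤ κ β) :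
    sigmaV1 j κ α * κ α ≤ sigmaV1 j κ β * κ β := by
  have hβmem : β ∈ Finset.univ.erase α :=
    Finset.mem_erase.2 ⟨hne.symm, Finset.mem_univ β⟩
  have hαmem : α ∈ Finset.univ.erase β :=
    Finset.mem_erase.2 ⟨hne, Finset.mem_univ α⟩
  have h1 := sigmaE_erase (Finset.univ.erase α) β hβmem j κ
  have h2 := sigmaE_erase (Finset.univ.erase β) α hαmem j κ
  have hcomm : (Finset.univ.erase β).erase α = (Finset.univ.erase α).erase β :=
    Finset.erase_right_comm
  rw [hcomm] at h2
  have hA : 0 ≤ sigmaE ((Finset.univ.erase α).erase β) j κ :=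
    sigmaE_nonneg _ _ _ fun i _ => hκ i
  unfold sigmaV1
  rw [h1, h2]
  nlinarith [hκ α, hκ β]

/-- Case 1 estimate, (2.16): with `λ₁ ≥ ⋯ ≥ λ_n > 0`, `κ_α = 1/λ_α`,
`F^{αα} = σ_{k-1}(κ|α)κ_α²/σ_k(κ)²`, if some index `α₀ ≥ 2` satisfies
`|ξ_{α₀}/λ_{α₀}| ≥ δ₀ |ξ₁/λ₁|`, then
`Σ_α F^{αα} ξ_α²/λ_α ≥ (1 + δ̃δ₀²) F^{11} ξ₁²/λ₁ + (1-δ̃) Σ_{α≥2} F^{αα} ξ_α²/λ_α`. -/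
theorem stmt_13 (n k : ℕ) (hn : 2 ≤ n) (hk1 : 1 ≤ k) (hk2 : k ≤ n - 1)
    (δ₀ δt : ℝ) (hδ₀ : 0 < δ₀) (hδ₀' : δ₀ ≤ 1) (hδt : 0 < δt) (hδt' : δt ≤ 1)
    (lam : Fin n → ℝ) (hpos : ∀ α, 0 < lam α) (hord : ∀ α β : Fin n, α ≤ β → lam β ≤ lam α)
    (ξ : Fin n → ℝ) :
    let i0 : Fin n := ⟨0, by omega⟩
    let κ : Fin n → ℝ := fun α => (lam α)⁻¹
    let Fd : Fin n → ℝ := fun α => sigmaV1 ((k : ℤ) - 1) κ α * (κ α) ^ 2 / (sigmaV (k : ℤ) κ) ^ 2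
    (∃ α₀ : Fin n, α₀ ≠ i0 ∧ δ₀ * |ξ i0 / lam i0| ≤ |ξ α₀ / lam α₀|) →
    ∑ α, Fd α * (ξ α) ^ 2 / lam α
      ≥ (1 + δt * δ₀ ^ 2) * Fd i0 * (ξ i0) ^ 2 / lam i0
        + (1 - δt) * ∑ α ∈ Finset.univ.erase i0, Fd α * (ξ α) ^ 2 / lam α := by
  intro i0 κ Fd
  rintro ⟨α₀, hne, habs⟩
  have hκpos : ∀ i, 0 < κ i := fun i => inv_pos.2 (hpos i)
  -- nonnegativity of Fd and of each term
  have hFd : ∀ α, 0 ≤ Fd α := by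
    intro α
    refine div_nonneg (mul_nonneg ?_ (sq_nonneg _)) (sq_nonneg _)
    exact sigmaE_nonneg _ _ _ fun i _ => (hκpos i).le
  have hterm : ∀ α, 0 ≤ Fd α * (ξ α) ^ 2 / lam α := fun α =>
    div_nonneg (mul_nonneg (hFd α) (sq_nonneg _)) (hpos α).le
  -- rewrite each term
  have hrw : ∀ α, Fd α * (ξ α) ^ 2 / lam α
      = (sigmaV1 ((k : ℤ) - 1) κ α * κ α) * (ξ α / lam α) ^ 2 / (sigmaV (k : ℤ) κ) ^ 2 := by
    intro α
    show sigmaV1 ((k : ℤ) - 1) κ α * ((lam α)⁻¹) ^ 2 / (sigmaV (k : ℤ) κ) ^ 2 * (ξ α) ^ 2 / lam α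
        = (sigmaV1 ((k : ℤ) - 1) κ α * (lam α)⁻¹) * (ξ α / lam α) ^ 2 / (sigmaV (k : ℤ) κ) ^ 2
    have h0 : lam α ≠ 0 := (hpos α).ne'
    field_simp
  -- the key single-term comparison
  have hκle : κ i0 ≤ κ α₀ := by
    have : lam α₀ ≤ lam i0 := hord i0 α₀ (Fin.le_def.2 (Nat.zero_le _))
    exact inv_anti₀ (hpos α₀) this
  have hG : sigmaV1 ((k : ℤ) - 1) κ i0 * κ i0 ≤ sigmaV1 ((k : ℤ) - 1) κ α₀ * κ α₀ :=
    sigmaV1_mul_mono κ (fun i => (hκpos i).le) _ i0 α₀ (Ne.symm hne) hκle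
  have hGnn : 0 ≤ sigmaV1 ((k : ℤ) - 1) κ i0 * κ i0 :=
    mul_nonneg (sigmaE_nonneg _ _ _ fun i _ => (hκpos i).le) (hκpos i0).le
  have hsq : δ₀ ^ 2 * (ξ i0 / lam i0) ^ 2 ≤ (ξ α₀ / lam α₀) ^ 2 := by
    have h1 : (δ₀ * |ξ i0 / lam i0|) ^ 2 ≤ |ξ α₀ / lam α₀| ^ 2 := by
      refine pow_le_pow_left₀ ?_ habs 2
      positivity
    calc δ₀ ^ 2 * (ξ i0 / lam i0) ^ 2 = (δ₀ * |ξ i0 / lam i0|) ^ 2 := by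
          rw [mul_pow, sq_abs]
      _ ≤ |ξ α₀ / lam α₀| ^ 2 := h1
      _ = (ξ α₀ / lam α₀) ^ 2 := sq_abs _
  have hkey : δ₀ ^ 2 * (Fd i0 * (ξ i0) ^ 2 / lam i0) ≤ Fd α₀ * (ξ α₀) ^ 2 / lam α₀ := by
    rw [hrw i0, hrw α₀]
    have hmul : (sigmaV1 ((k : ℤ) - 1) κ i0 * κ i0) * (δ₀ ^ 2 * (ξ i0 / lam i0) ^ 2)
        ≤ (sigmaV1 ((k : ℤ) - 1) κ α₀ * κ α₀) * (ξ α₀ / lam α₀) ^ 2 :=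
      mul_le_mul hG hsq (by positivity) (le_trans hGnn hG)
    calc δ₀ ^ 2 * ((sigmaV1 ((k : ℤ) - 1) κ i0 * κ i0) * (ξ i0 / lam i0) ^ 2
              / (sigmaV (k : ℤ) κ) ^ 2)
          = ((sigmaV1 ((k : ℤ) - 1) κ i0 * κ i0) * (δ₀ ^ 2 * (ξ i0 / lam i0) ^ 2))
              * ((sigmaV (k : ℤ) κ) ^ 2)⁻¹ := by ring
        _ ≤ ((sigmaV1 ((k : ℤ) - 1) κ α₀ * κ α₀) * (ξ α₀ / lam α₀) ^ 2)
              * ((sigmaV (k : ℤ) κ) ^ 2)⁻¹ := by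
            exact mul_le_mul_of_nonneg_right hmul (by positivity)
        _ = (sigmaV1 ((k : ℤ) - 1) κ α₀ * κ α₀) * (ξ α₀ / lam α₀) ^ 2
              / (sigmaV (k : ℤ) κ) ^ 2 := by ring
  -- sum over the erased set dominates the single term
  have hα₀mem : α₀ ∈ Finset.univ.erase i0 :=
    Finset.mem_erase.2 ⟨hne, Finset.mem_univ α₀⟩
  have hS : δ₀ ^ 2 * (Fd i0 * (ξ i0) ^ 2 / lam i0)
      ≤ ∑ α ∈ Finset.univ.erase i0, Fd α * (ξ α) ^ 2 / lam α :=
    hkey.trans (Finset.single_le_sum (fun α _ => hterm α) hα₀mem)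
  have hsplit : ∑ α, Fd α * (ξ α) ^ 2 / lam α
      = Fd i0 * (ξ i0) ^ 2 / lam i0 + ∑ α ∈ Finset.univ.erase i0, Fd α * (ξ α) ^ 2 / lam α :=
    (Finset.add_sum_erase _ _ (Finset.mem_univ i0)).symm
  rw [hsplit, ge_iff_le]
  have heq : (1 + δt * δ₀ ^ 2) * Fd i0 * (ξ i0) ^ 2 / lam i0
      = Fd i0 * (ξ i0) ^ 2 / lam i0 + δt * (δ₀ ^ 2 * (Fd i0 * (ξ i0) ^ 2 / lam i0)) := by
    ring
  rw [heq]
  have := mul_le_mul_of_nonneg_left hS hδt.le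
  linarith
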